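/- For a minimal Z^d subshift X, the extender entropy equals the topological entropy: h_E(X) = h(X) = lim_n (log |L_n(X)|)/n^d, where L_n(X) is the set of patterns of support [0,n-1]^d in the language of X. -/

import Mathlib

open Filter Topology

/-- Membership in the cube `[0,n-1]^d`. -/
def inCube (d n : ℕ) (p : Fin d → ℤ) : Prop := ∀ i, 0 ≤ p i ∧ p i < (n : ℤ)

instance (d n : ℕ) : DecidablePred (inCube d n) := fun _ => by
  unfold inCube; infer_instance

/-- Glue the cube pattern `w` onto the completion `x` outside `[0,n-1]^d`. -/
def glueCube {A : Type*} {d : ℕ} (n : ℕ) (w x : (Fin d → ℤ) → A) :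
    (Fin d → ℤ) → A :=
  fun p => if inCube d n p then w p else x p

/-- The extender set of a pattern of support `[0,n-1]^d`. -/
def extSetCube {A : Type*} {d : ℕ} (X : Set ((Fin d → ℤ) → A)) (n : ℕ)
    (w : (Fin d → ℤ) → A) : Set ((Fin d → ℤ) → A) :=
  {x | glueCube n w x ∈ X}

/-- The pattern `w` (restricted to `[0,n-1]^d`) appears in some configuration of `X`. -/
def inLangCube {A : Type*} {d : ℕ} (X : Set ((Fin d → ℤ) → A)) (n : ℕ)
    (w : (Fin d → ℤ) → A) : Prop :=
  ∃ x ∈ X, ∃ t : Fin d → ℤ, ∀ p : Fin d → ℤ, inCube d n p → x (t + p) = w p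

/-- The collection of extender sets of patterns of support `[0,n-1]^d`. -/
def extSetsCube {A : Type*} {d : ℕ} (X : Set ((Fin d → ℤ) → A)) (n : ℕ) :
    Set (Set ((Fin d → ℤ) → A)) :=
  {E | ∃ w : (Fin d → ℤ) → A, inLangCube X n w ∧ E = extSetCube X n w}

/-- A `ℤ^d`-subshift: a closed, shift-invariant subset of `A^(ℤ^d)`. -/
def IsSubshiftCube {A : Type*} [TopologicalSpace A] {d : ℕ}
    (X : Set ((Fin d → ℤ) → A)) : Prop :=
  IsClosed X ∧ ∀ x ∈ X, ∀ t : Fin d → ℤ, (fun p => x (p + t)) ∈ X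

/-- The sequence `n ↦ log |E_X(n)| / n^d` whose limit is the extender entropy. -/
noncomputable def extEntCube {A : Type*} {d : ℕ} (X : Set ((Fin d → ℤ) → A)) (n : ℕ) : ℝ :=
  Real.log ((extSetsCube X n).ncard) / (n : ℝ) ^ d

/-- A minimal subshift: a subshift containing no nonempty proper subshift. -/
def IsMinimalSubshift {A : Type*} [TopologicalSpace A] {d : ℕ}
    (X : Set ((Fin d → ℤ) → A)) : Prop :=
  IsSubshiftCube X ∧ ∀ Y ⊆ X, IsSubshiftCube Y → Y.Nonempty → Y = X

/-- The set of patterns of support `[0,n-1]^d` appearing in `X`, as functions on the cube. -/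
def langSetCube {A : Type*} {d : ℕ} (X : Set ((Fin d → ℤ) → A)) (n : ℕ) :
    Set ({p : Fin d → ℤ // inCube d n p} → A) :=
  {w | ∃ x ∈ X, ∃ t : Fin d → ℤ, ∀ p : {p : Fin d → ℤ // inCube d n p}, x (t + p.val) = w p}

namespace MinExtAux

/-- A translation-invariant linear (lexicographic) order on `ℤ^d`.
(Declared by hand since instance search for `WellFoundedLT (Fin d)` gets stuck.) -/
noncomputable instance lexZd (d : ℕ) : LinearOrder (Lex (Fin d → ℤ)) :=
  letI : WellFoundedLT (Fin d) := Finite.to_wellFoundedLT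
  inferInstance

/-- The box `[-N,N]^d` as a fresh type (avoiding pre-existing subtype order instances). -/
def Box (d N : ℕ) : Type :=
  Subtype (fun p : Fin d → ℤ => ∀ i, |p i| ≤ (N : ℤ))

/-- Underlying point of a box element. -/
def Box.val {d N : ℕ} (p : Box d N) : Fin d → ℤ :=
  Subtype.val (α := Fin d → ℤ) p

lemma Box.isBounded {d N : ℕ} (p : Box d N) : ∀ i, |Box.val p i| ≤ (N : ℤ) :=
  Subtype.prop (α := Fin d → ℤ) (p := fun p : Fin d → ℤ => ∀ i, |p i| ≤ (N : ℤ)) p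

/-- Constructor for box elements. -/
def Box.mk {d N : ℕ} (p : Fin d → ℤ) (h : ∀ i, |p i| ≤ (N : ℤ)) : Box d N :=
  Subtype.mk p h

@[simp] lemma Box.val_mk {d N : ℕ} (p : Fin d → ℤ) (h : ∀ i, |p i| ≤ (N : ℤ)) :
    Box.val (Box.mk p h) = p := rfl

lemma Box.val_injective {d N : ℕ} : Function.Injective (Box.val (d := d) (N := N)) :=
  fun _ _ h => Subtype.ext h

instance Box.finite (d N : ℕ) : Finite (Box d N) :=
  Finite.of_injective (fun p : Box d N => (fun i => (⟨(Box.val p i + N).toNat, by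
      have h' := abs_le.mp (Box.isBounded p i)
      omega⟩ : Fin (2 * N + 1)))) (by
    intro a b h
    apply Box.val_injective; funext i
    have ha := abs_le.mp (Box.isBounded a i); have hb := abs_le.mp (Box.isBounded b i)
    have := congrFun h i
    simp only [Fin.mk.injEq] at this
    omega)

noncomputable instance Box.linearOrder (d N : ℕ) : LinearOrder (Box d N) :=
  LinearOrder.lift' (fun p : Box d N => toLex (Box.val p))
    (fun a b h => Box.val_injective (toLex.injective h))

instance Box.wellFoundedLT (d N : ℕ) : WellFoundedLT (Box d N) :=
  Finite.to_wellFoundedLT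

noncomputable instance Box.lexPiLinearOrder (d N : ℕ) (A : Type*) [LinearOrder A] :
    LinearOrder (Lex (Box d N → A)) :=
  @Pi.Lex.linearOrder (Box d N) (fun _ => A) _ _ (fun _ => inferInstance)

variable {A : Type*} {d : ℕ}

/-- The cube as a subtype. -/
abbrev Cube (d n : ℕ) := {p : Fin d → ℤ // inCube d n p}

instance cubeFinite (d n : ℕ) : Finite (Cube d n) :=
  Finite.of_injective (fun p : Cube d n => (fun i => (⟨(p.1 i).toNat, by
      have h := p.2 i; omega⟩ : Fin n))) (by
    intro a b h
    apply Subtype.ext; funext i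
    have ha := a.2 i; have hb := b.2 i
    have := congrFun h i
    simp only [Fin.mk.injEq] at this
    omega)

/-- `u` occurs in `x` at position `t`. -/
def occursAt (x : (Fin d → ℤ) → A) (n : ℕ) (u : Cube d n → A) (t : Fin d → ℤ) : Prop :=
  ∀ p : Cube d n, x (t + p.val) = u p

/-- Glueing a cube-pattern onto a completion. -/
def gluePat {d : ℕ} (n : ℕ) (u : Cube d n → A) (x : (Fin d → ℤ) → A) : (Fin d → ℤ) → A :=
  fun p => if h : inCube d n p then u ⟨p, h⟩ else x p

/-- Extender set of a cube-pattern. -/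
def extSet' (X : Set ((Fin d → ℤ) → A)) (n : ℕ) (u : Cube d n → A) :
    Set ((Fin d → ℤ) → A) := {x | gluePat n u x ∈ X}

lemma glue_eq (n : ℕ) (w x : (Fin d → ℤ) → A) :
    glueCube n w x = gluePat n (fun p : Cube d n => w p.1) x := by
  funext p; by_cases h : inCube d n p <;> simp [glueCube, gluePat, h]

variable {X : Set ((Fin d → ℤ) → A)} {n : ℕ}

lemma isOpen_occ [TopologicalSpace A] [DiscreteTopology A] (u : Cube d n → A) (t : Fin d → ℤ) :
    IsOpen {x : (Fin d → ℤ) → A | occursAt x n u t} := by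
  have h : {x : (Fin d → ℤ) → A | occursAt x n u t}
      = ⋂ p : Cube d n, (fun x : (Fin d → ℤ) → A => x (t + p.1)) ⁻¹' {u p} := by
    ext x; simp [occursAt, Set.mem_iInter]
  rw [h]
  exact isOpen_iInter_of_finite fun p =>
    (continuous_apply (t + p.1)).isOpen_preimage _ (isOpen_discrete _)

lemma replace_mem [TopologicalSpace A] (hX : IsSubshiftCube X) {u v : Cube d n → A}
    (hE : extSet' X n u = extSet' X n v) {x : (Fin d → ℤ) → A} {t : Fin d → ℤ}
    (hx : x ∈ X) (hocc : occursAt x n u t) :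
    (fun p => if h : inCube d n (p - t) then v ⟨p - t, h⟩ else x p) ∈ X := by
  have hz : (fun q => x (q + t)) ∈ X := hX.2 x hx t
  have hzu : gluePat n u (fun q => x (q + t)) = fun q => x (q + t) := by
    funext q
    by_cases h : inCube d n q
    · simp only [gluePat, dif_pos h]
      rw [← hocc ⟨q, h⟩, add_comm]
    · simp [gluePat, h]
  have hmem : (fun q => x (q + t)) ∈ extSet' X n u := by
    show gluePat n u _ ∈ X
    rw [hzu]; exact hz
  rw [hE] at hmem
  have h2 : (fun p => gluePat n v (fun q => x (q + t)) (p + (-t))) ∈ X := hX.2 _ hmem (-t)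
  convert h2 using 1
  funext p
  have hpt : p + -t = p - t := (sub_eq_add_neg p t).symm
  by_cases h : inCube d n (p - t)
  · simp only [gluePat, hpt, dif_pos h]
  · simp only [gluePat, hpt, dif_neg h]
    rw [sub_add_cancel]

lemma everywhere [TopologicalSpace A] [DiscreteTopology A] (hmin : IsMinimalSubshift X)
    {u : Cube d n → A} (hu : ∃ x ∈ X, ∃ t, occursAt x n u t) :
    ∀ x ∈ X, ∃ t, occursAt x n u t := by
  by_contra hcon
  push_neg at hcon
  obtain ⟨y, hyX, hy⟩ := hcon
  set Y := {x ∈ X | ∀ t, ¬ occursAt x n u t} with hYdef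
  have hYsub : Y ⊆ X := fun z hz => hz.1
  have hYshift : IsSubshiftCube Y := by
    constructor
    · have h : Y = X ∩ ⋂ t, {x | occursAt x n u t}ᶜ := by
        ext z; simp [hYdef, Set.mem_iInter]
      rw [h]
      exact hmin.1.1.inter (isClosed_iInter fun t => (isOpen_occ u t).isClosed_compl)
    · rintro z ⟨hzX, hz⟩ t
      refine ⟨hmin.1.2 z hzX t, fun s hs => hz (s + t) fun p => ?_⟩
      rw [add_right_comm]
      exact hs p
  have hYX : Y = X := hmin.2 Y hYsub hYshift ⟨y, hyX, fun t ht => hy t ht⟩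
  obtain ⟨x, hxX, t, ht⟩ := hu
  rw [← hYX] at hxX
  exact hxX.2 t ht

lemma syndetic [Fintype A] [TopologicalSpace A] [DiscreteTopology A]
    (hmin : IsMinimalSubshift X) {u : Cube d n → A}
    (hu : ∃ x ∈ X, ∃ t, occursAt x n u t) :
    ∃ R : ℕ, ∀ x ∈ X, ∃ t, (∀ i, |t i| ≤ (R : ℤ)) ∧ occursAt x n u t := by
  by_contra hcon
  push_neg at hcon
  set C : ℕ → Set ((Fin d → ℤ) → A) :=
    fun R => {x ∈ X | ∀ t, (∀ i, |t i| ≤ (R : ℤ)) → ¬ occursAt x n u t} with hCdef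
  have hCc : ∀ R, IsClosed (C R) := by
    intro R
    have h : C R = X ∩ ⋂ t, ⋂ (_ : ∀ i, |t i| ≤ (R : ℤ)), {x | occursAt x n u t}ᶜ := by
      ext z; simp [hCdef, Set.mem_iInter]
    rw [h]
    exact hmin.1.1.inter (isClosed_iInter fun t =>
      isClosed_iInter fun _ => (isOpen_occ u t).isClosed_compl)
  have hmono : ∀ R, C (R + 1) ⊆ C R := by
    rintro R z ⟨hzX, hz⟩
    refine ⟨hzX, fun t ht => hz t fun i => (ht i).trans ?_⟩
    exact_mod_cast Nat.le_succ R
  have hne : ∀ R, (C R).Nonempty := by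
    intro R
    obtain ⟨x, hxX, hx⟩ := hcon R
    exact ⟨x, hxX, hx⟩
  have hcpt : IsCompact (C 0) := (hCc 0).isCompact
  obtain ⟨y, hy⟩ :=
    IsCompact.nonempty_iInter_of_sequence_nonempty_isCompact_isClosed C hmono hne hcpt hCc
  simp only [Set.mem_iInter] at hy
  have hyX : y ∈ X := (hy 0).1
  obtain ⟨t, ht⟩ := everywhere hmin hu y hyX
  set R : ℕ := Finset.univ.sup fun i => (t i).natAbs with hRdef
  refine (hy R).2 t (fun i => ?_) ht
  have hle : (t i).natAbs ≤ R :=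
    Finset.le_sup (f := fun i => (t i).natAbs) (Finset.mem_univ i)
  rw [Int.abs_eq_natAbs]
  exact_mod_cast hle

lemma lex_add_le (t : Fin d → ℤ) {a b : Fin d → ℤ} (h : toLex a ≤ toLex b) :
    toLex (t + a) ≤ toLex (t + b) := by
  rcases eq_or_lt_of_le h with h' | h'
  · have : a = b := toLex.injective h'
    rw [this]
  · have h'' : Pi.Lex (· < ·) (fun {_} => (· < ·)) a b := h'
    obtain ⟨i, hji, hi⟩ := h''
    have hlex : Pi.Lex (· < ·) (fun {_} => (· < ·)) (t + a) (t + b) :=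
      ⟨i, fun j hj => congrArg (fun z => t j + z) (hji j hj), (add_lt_add_iff_left (t i)).2 hi⟩
    exact le_of_lt hlex

lemma key [Fintype A] [TopologicalSpace A] [DiscreteTopology A] [LinearOrder A]
    (hmin : IsMinimalSubshift X) {u v : Cube d n → A}
    (hu : ∃ x ∈ X, ∃ t, occursAt x n u t)
    (hE : extSet' X n u = extSet' X n v)
    (j0 : Cube d n) (hlt : u j0 < v j0)
    (hmin0 : ∀ j : Cube d n, u j ≠ v j → toLex j0.1 ≤ toLex j.1) : False := by
  obtain ⟨R, hR⟩ := syndetic hmin hu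
  set N : ℕ := R + n with hNdef
  let ρ : ((Fin d → ℤ) → A) → Lex (Box d N → A) := fun x => toLex fun p => x (Box.val p)
  have hSne : (ρ '' X).Nonempty := by
    obtain ⟨x, hx, -⟩ := hu
    exact ⟨ρ x, x, hx, rfl⟩
  haveI : Finite (Lex (Box d N → A)) := Finite.of_equiv _ toLex
  obtain ⟨m, hmmem, hmax⟩ := Set.exists_max_image (ρ '' X) id (Set.toFinite _) hSne
  obtain ⟨x0, hx0X, rfl⟩ := hmmem
  obtain ⟨t, htb, hocc⟩ := hR x0 hx0X
  set y : (Fin d → ℤ) → A :=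
    (fun p => if h : inCube d n (p - t) then v ⟨p - t, h⟩ else x0 p) with hydef
  have hyX : y ∈ X := replace_mem hmin.1 hE hx0X hocc
  have hi0 : ∀ i, |t i + j0.1 i| ≤ (N : ℤ) := by
    intro i
    have h1 := abs_le.mp (htb i)
    have h2 := j0.2 i
    rw [abs_le, hNdef]
    push_cast
    omega
  let istar : Box d N := Box.mk (t + j0.1) hi0
  have histar : Box.val istar = t + j0.1 := rfl
  have hsub : t + j0.1 - t = j0.1 := by funext i; simp
  have hyst : y (t + j0.1) = v j0 := by
    show (if h : inCube d n (t + j0.1 - t) then v ⟨t + j0.1 - t, h⟩ else x0 (t + j0.1)) = v j0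
    simp only [hsub]
    rw [dif_pos j0.2]
  have hxst : x0 (t + j0.1) = u j0 := hocc j0
  have hplex : Pi.Lex (· < ·) (fun {_} => (· < ·))
      (fun p : Box d N => x0 (Box.val p)) (fun p : Box d N => y (Box.val p)) := by
    refine ⟨istar, fun k hk => ?_, ?_⟩
    · -- k < istar : values agree
      have hk' : toLex (Box.val k) < toLex (Box.val istar) := hk
      by_cases h : inCube d n (Box.val k - t)
      · have hadd : t + (Box.val k - t) = Box.val k := by funext i; simp
        have hval : y (Box.val k) = v ⟨Box.val k - t, h⟩ := by
          show (if h' : inCube d n (Box.val k - t) then v ⟨Box.val k - t, h'⟩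
              else x0 (Box.val k)) = _
          rw [dif_pos h]
        have hx : x0 (Box.val k) = u ⟨Box.val k - t, h⟩ := by
          have h3 := hocc ⟨Box.val k - t, h⟩
          rwa [hadd] at h3
        by_cases huv : u ⟨Box.val k - t, h⟩ = v ⟨Box.val k - t, h⟩
        · show x0 (Box.val k) = y (Box.val k)
          rw [hx, hval, huv]
        · exfalso
          have h1 := hmin0 _ huv
          have h2 : toLex (t + j0.1) ≤ toLex (t + (Box.val k - t)) := lex_add_le t h1
          rw [hadd] at h2
          rw [histar] at hk'
          exact absurd hk' (not_lt.2 h2)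
      · show x0 (Box.val k) = y (Box.val k)
        show x0 (Box.val k) = (if h' : inCube d n (Box.val k - t) then v ⟨Box.val k - t, h'⟩
            else x0 (Box.val k))
        rw [dif_neg h]
    · show x0 (Box.val istar) < y (Box.val istar)
      rw [histar, hxst, hyst]
      exact hlt
  have hlt2 : ρ x0 < ρ y := hplex
  have hle := hmax (ρ y) ⟨y, hyX, rfl⟩
  exact absurd hle (not_le.mpr hlt2)

lemma ext_inj [Fintype A] [TopologicalSpace A] [DiscreteTopology A]
    (hmin : IsMinimalSubshift X) {u v : Cube d n → A}
    (hu : ∃ x ∈ X, ∃ t, occursAt x n u t) (hv : ∃ x ∈ X, ∃ t, occursAt x n v t)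
    (hE : extSet' X n u = extSet' X n v) : u = v := by
  classical
  letI : LinearOrder A := LinearOrder.lift' (Fintype.equivFin A) (Fintype.equivFin A).injective
  by_contra hne
  have hD : {j : Cube d n | u j ≠ v j}.Nonempty := by
    obtain ⟨j, hj⟩ := Function.ne_iff.mp hne
    exact ⟨j, hj⟩
  obtain ⟨j0, hj0D, hminL⟩ :=
    Set.exists_min_image {j : Cube d n | u j ≠ v j} (fun j => toLex j.1) (Set.toFinite _) hD
  have hmin0 : ∀ j : Cube d n, u j ≠ v j → toLex j0.1 ≤ toLex j.1 := fun j hj => hminL j hj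
  rcases lt_or_gt_of_ne (show u j0 ≠ v j0 from hj0D) with h | h
  · exact key hmin hu hE j0 h hmin0
  · exact key hmin hv hE.symm j0 h (fun j hj => hmin0 j (Ne.symm hj))

end MinExtAux

/-- For a minimal `ℤ^d` subshift, `|E_X(n)| = |L_n(X)|` for all `n`, hence the
extender entropy equals the topological entropy. -/
theorem minimal_extender_entropy_eq_topological {A : Type*} [Fintype A]
    [TopologicalSpace A] [DiscreteTopology A] {d : ℕ}
    (X : Set ((Fin d → ℤ) → A)) (hmin : IsMinimalSubshift X) :
    (∀ n : ℕ, (extSetsCube X n).ncard = (langSetCube X n).ncard) ∧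
    (∀ α : ℝ, Tendsto (extEntCube X) atTop (nhds α) ↔
      Tendsto (fun n => Real.log ((langSetCube X n).ncard) / (n : ℝ) ^ d) atTop (nhds α)) := by
  have key1 : ∀ n : ℕ, (extSetsCube X n).ncard = (langSetCube X n).ncard := by
    intro n
    have himg : extSetsCube X n = (fun u => MinExtAux.extSet' X n u) '' (langSetCube X n) := by
      ext E
      constructor
      · rintro ⟨w, hw, rfl⟩
        refine ⟨fun p => w p.1, ?_, ?_⟩
        · obtain ⟨x, hx, t, hxt⟩ := hw
          exact ⟨x, hx, t, fun p => hxt p.1 p.2⟩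
        · ext x
          show glueCube n w x ∈ X ↔ MinExtAux.gluePat n (fun p => w p.1) x ∈ X
          rw [MinExtAux.glue_eq]
      · rintro ⟨w, hw, rfl⟩
        obtain ⟨x, hx, t, hxt⟩ := hw
        refine ⟨fun p => x (t + p), ⟨x, hx, t, fun p _ => rfl⟩, ?_⟩
        ext z
        show MinExtAux.gluePat n w z ∈ X ↔ glueCube n (fun p => x (t + p)) z ∈ X
        rw [MinExtAux.glue_eq]
        have hrw : (fun p : {p : Fin d → ℤ // inCube d n p} => x (t + p.1)) = w :=
          funext hxt
        rw [hrw]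
    rw [himg]
    rw [Set.ncard_image_of_injOn]
    intro a ha b hb hab
    exact MinExtAux.ext_inj hmin ha hb hab
  refine ⟨key1, fun α => ?_⟩
  exact Filter.tendsto_congr fun n => by unfold extEntCube; rw [key1 n]
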